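/- If A and B are nonempty compact subsets of ℝ with gap(A) ≤ diam(B), then gap(A + B) ≤ gap(B). -/

import Mathlib

open Pointwise

/-- The length of the longest bounded interval complementary to `A`:
`gap A = min {ℓ ≥ 0 : A + [0,ℓ] is an interval}`. -/
noncomputable def gap (A : Set ℝ) : ℝ :=
  sInf {ℓ : ℝ | 0 ≤ ℓ ∧ (A + Set.Icc 0 ℓ).OrdConnected}

namespace GapAux

open Set

lemma ordConnected_add {S T : Set ℝ} (hS : S.OrdConnected) (hT : T.OrdConnected) :
    (S + T).OrdConnected := by
  constructor
  rintro x ⟨s, hs, t, ht, rfl⟩ y ⟨s', hs', t', ht', rfl⟩ z ⟨hz1, hz2⟩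
  dsimp only at hz1 hz2
  by_cases hc : z ≤ s' + t
  · exact ⟨z - t, hS.out hs hs' ⟨by linarith, by linarith⟩, t, ht, by ring⟩
  · exact ⟨s', hs', z - s', hT.out ht ht' ⟨by linarith, by linarith⟩, by ring⟩

lemma gapSet_nonempty {A : Set ℝ} (hA : IsCompact A) (hAne : A.Nonempty) :
    {ℓ : ℝ | 0 ≤ ℓ ∧ (A + Set.Icc 0 ℓ).OrdConnected}.Nonempty := by
  set m := sInf A with hm
  set M := sSup A with hM
  have hmA : m ∈ A := hA.sInf_mem hAne
  have hMA : M ∈ A := hA.sSup_mem hAne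
  have hmM : m ≤ M := csInf_le_csSup hAne hA.bddBelow hA.bddAbove
  have hbounds : ∀ a ∈ A, m ≤ a ∧ a ≤ M := fun a ha =>
    ⟨csInf_le hA.bddBelow ha, le_csSup hA.bddAbove ha⟩
  refine ⟨M - m, by linarith, ?_⟩
  have heq : A + Icc 0 (M - m) = Icc m (2 * M - m) := by
    apply Subset.antisymm
    · rintro x ⟨a, ha, t, ⟨ht0, ht1⟩, rfl⟩
      obtain ⟨h1, h2⟩ := hbounds a ha
      refine ⟨?_, ?_⟩ <;> dsimp only <;> linarith
    · rintro x ⟨h1, h2⟩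
      by_cases hx : x ≤ M
      · exact ⟨m, hmA, x - m, ⟨by linarith, by linarith⟩, by ring⟩
      · exact ⟨M, hMA, x - M, ⟨by linarith, by linarith⟩, by ring⟩
  rw [heq]
  exact ordConnected_Icc

lemma gapSet_upward {A : Set ℝ} {ℓ ℓ' : ℝ}
    (hℓ : ℓ ∈ {ℓ : ℝ | 0 ≤ ℓ ∧ (A + Set.Icc 0 ℓ).OrdConnected}) (hle : ℓ ≤ ℓ') :
    ℓ' ∈ {ℓ : ℝ | 0 ≤ ℓ ∧ (A + Set.Icc 0 ℓ).OrdConnected} := by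
  obtain ⟨h0, hoc⟩ := hℓ
  refine ⟨le_trans h0 hle, ?_⟩
  have hIcc : Icc (0:ℝ) ℓ + Icc 0 (ℓ' - ℓ) = Icc 0 ℓ' := by
    rw [Icc_add_Icc h0 (by linarith : (0:ℝ) ≤ ℓ' - ℓ)]
    norm_num
  have : A + Icc 0 ℓ' = (A + Icc 0 ℓ) + Icc 0 (ℓ' - ℓ) := by
    rw [add_assoc, hIcc]
  rw [this]
  exact ordConnected_add hoc ordConnected_Icc

lemma gap_mem {A : Set ℝ} (hA : IsCompact A) (hAne : A.Nonempty) :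
    gap A ∈ {ℓ : ℝ | 0 ≤ ℓ ∧ (A + Set.Icc 0 ℓ).OrdConnected} := by
  set S := {ℓ : ℝ | 0 ≤ ℓ ∧ (A + Set.Icc 0 ℓ).OrdConnected} with hS
  have hSne : S.Nonempty := gapSet_nonempty hA hAne
  have hSbdd : BddBelow S := ⟨0, fun ℓ hℓ => hℓ.1⟩
  have hg0 : 0 ≤ gap A := le_csInf hSne (fun ℓ hℓ => hℓ.1)
  have hup : ∀ n : ℕ, gap A + 1 / (n + 1) ∈ S := by
    intro n
    have hpos : (0:ℝ) < 1 / (n + 1) := by positivity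
    obtain ⟨ℓ, hℓS, hℓlt⟩ := exists_lt_of_csInf_lt hSne
      (show sInf S < gap A + 1 / (n + 1) by unfold gap; linarith [hpos])
    exact gapSet_upward hℓS (le_of_lt hℓlt)
  refine ⟨hg0, ?_⟩
  constructor
  intro x hx y hy z ⟨hz1, hz2⟩
  -- z is in A + Icc 0 (gap A + 1/(n+1)) for every n
  have hzn : ∀ n : ℕ, (A ∩ Icc (z - (gap A + 1 / (n + 1))) z).Nonempty := by
    intro n
    have hsub : A + Icc 0 (gap A) ⊆ A + Icc 0 (gap A + 1 / (n + 1)) := by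
      apply add_subset_add_left
      apply Icc_subset_Icc_right
      have : (0:ℝ) < 1 / (n + 1) := by positivity
      linarith
    have hz : z ∈ A + Icc 0 (gap A + 1 / (n + 1)) :=
      (hup n).2.out (hsub hx) (hsub hy) ⟨hz1, hz2⟩
    obtain ⟨a, ha, t, ⟨ht0, ht1⟩, hat⟩ := hz
    dsimp only at hat
    exact ⟨a, ha, ⟨by linarith, by linarith⟩⟩
  set K : ℕ → Set ℝ := fun n => A ∩ Icc (z - (gap A + 1 / (n + 1))) z with hK
  have hanti : ∀ p q : ℕ, p ≤ q → K q ⊆ K p := by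
    intro p q hpq x ⟨hxA, hx1, hx2⟩
    have hpq' : (p:ℝ) ≤ q := Nat.cast_le.mpr hpq
    have : 1 / ((q:ℝ) + 1) ≤ 1 / ((p:ℝ) + 1) :=
      one_div_le_one_div_of_le (by positivity) (by linarith)
    exact ⟨hxA, by linarith, hx2⟩
  have hnece : (⋂ n, K n).Nonempty := by
    apply IsCompact.nonempty_iInter_of_directed_nonempty_isCompact_isClosed
    · intro p q
      exact ⟨max p q, hanti p _ (le_max_left p q), hanti q _ (le_max_right p q)⟩
    · exact hzn
    · exact fun n => hA.inter_right isClosed_Icc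
    · exact fun n => hA.isClosed.inter isClosed_Icc
  obtain ⟨a, ha⟩ := hnece
  simp only [mem_iInter] at ha
  have haA : a ∈ A := (ha 0).1
  have haz : a ≤ z := (ha 0).2.2
  have hga : z - a ≤ gap A := by
    by_contra hcon
    push_neg at hcon
    obtain ⟨n, hn⟩ := exists_nat_one_div_lt (show (0:ℝ) < z - a - gap A by linarith)
    have := (ha n).2.1
    have : z - (gap A + 1 / (n + 1)) ≤ a := this
    have hn' : 1 / ((n:ℝ) + 1) < z - a - gap A := hn
    linarith
  exact ⟨a, haA, z - a, ⟨by linarith, hga⟩, by ring⟩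

lemma mem_of_gap_le {A : Set ℝ} (hA : IsCompact A) (hAne : A.Nonempty) {ℓ : ℝ}
    (h : gap A ≤ ℓ) :
    ℓ ∈ {ℓ : ℝ | 0 ≤ ℓ ∧ (A + Set.Icc 0 ℓ).OrdConnected} :=
  gapSet_upward (gap_mem hA hAne) h

end GapAux

theorem gap_add_le (A B : Set ℝ) (hA : IsCompact A) (hAne : A.Nonempty)
    (hB : IsCompact B) (hBne : B.Nonempty) (h : gap A ≤ Metric.diam B) :
    gap (A + B) ≤ gap B := by
  open Set GapAux in
  have hmemB := gap_mem hB hBne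
  have hgB0 : 0 ≤ gap B := hmemB.1
  set C := B + Icc 0 (gap B) with hC
  have hCcomp : IsCompact C := hB.add isCompact_Icc
  have hCne : C.Nonempty := by
    obtain ⟨b, hb⟩ := hBne
    exact ⟨b + 0, b, hb, 0, ⟨le_refl 0, hgB0⟩, rfl⟩
  set c := sInf C with hc
  set d := sSup C with hd
  have hcC : c ∈ C := hCcomp.sInf_mem hCne
  have hdC : d ∈ C := hCcomp.sSup_mem hCne
  have hcd : c ≤ d := csInf_le_csSup hCne hCcomp.bddBelow hCcomp.bddAbove
  have hCeq : C = Icc c d := by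
    apply Subset.antisymm
    · exact fun x hx => ⟨csInf_le hCcomp.bddBelow hx, le_csSup hCcomp.bddAbove hx⟩
    · exact hmemB.2.out hcC hdC
  have hBsubC : B ⊆ C := by
    intro b hb
    exact ⟨b, hb, 0, ⟨le_refl 0, hgB0⟩, add_zero b⟩
  have hdiamB : Metric.diam B ≤ d - c := by
    have h1 : Metric.diam B ≤ Metric.diam (Icc c d) := by
      exact Metric.diam_mono (hCeq ▸ hBsubC) (Metric.isBounded_Icc (a := c) (b := d))
    rwa [Real.diam_Icc hcd] at h1
  have hL : gap A ≤ d - c := h.trans hdiamB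
  have hkey : ((A + B) + Icc 0 (gap B)).OrdConnected := by
    have e1 : (A + B) + Icc 0 (gap B) = A + C := by rw [hC, add_assoc]
    have e2 : Icc (0:ℝ) (d - c) + Icc c c = Icc c d := by
      rw [Icc_add_Icc (by linarith : (0:ℝ) ≤ d - c) (le_refl c)]
      norm_num
    have e3 : A + C = (A + Icc 0 (d - c)) + Icc c c := by
      rw [add_assoc, e2, hCeq]
    rw [e1, e3]
    exact ordConnected_add (mem_of_gap_le hA hAne hL).2 ordConnected_Icc
  apply csInf_le ⟨0, fun ℓ hℓ => hℓ.1⟩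
  exact ⟨hgB0, hkey⟩
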